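/- If A is an N×k array that is a (1̄,t)-locating array with column alphabet sizes 2≤v₁≤v₂≤⋯≤v_{k−t} and 2v_{k−t}≤v_{k−t+1}≤⋯≤v_k, then N ≥ ∏_{i=k−t+1}^{k} v_i. -/

import Mathlib

open Finset

/-- The set of rows of array `A` containing the interaction `(I, σ)`. -/
def rowsOf {R ι : Type*} [Fintype R] [DecidableEq ι] (A : R → ι → ℕ)
    (I : Finset ι) (σ : ι → ℕ) : Finset R :=
  Finset.univ.filter fun r => ∀ i ∈ I, A r i = σ i

/-- `(I, σ)` is a `t`-way interaction for alphabet sizes `v`. -/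
def isInter {ι : Type*} (v : ι → ℕ) (t : ℕ) (I : Finset ι) (σ : ι → ℕ) : Prop :=
  I.card = t ∧ ∀ i ∈ I, σ i < v i

/-- Mixed covering array of strength `t`: every `t`-way interaction appears in some row. -/
def isMCA {R ι : Type*} [Fintype R] [DecidableEq ι] (A : R → ι → ℕ) (v : ι → ℕ) (t : ℕ) : Prop :=
  ∀ I σ, isInter v t I σ → (rowsOf A I σ).Nonempty

/-- `(1,t)`-locating: distinct `t`-way interactions have distinct row supports. -/
def isLocating {R ι : Type*} [Fintype R] [DecidableEq ι] (A : R → ι → ℕ) (v : ι → ℕ) (t : ℕ) : Prop :=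
  ∀ I₁ σ₁ I₂ σ₂, isInter v t I₁ σ₁ → isInter v t I₂ σ₂ →
    rowsOf A I₁ σ₁ = rowsOf A I₂ σ₂ → I₁ = I₂ ∧ ∀ i ∈ I₁, σ₁ i = σ₂ i

/-- `(1̄,t)`-locating array: an MCA which is `(1,t)`-locating. -/
def isLA {R ι : Type*} [Fintype R] [DecidableEq ι] (A : R → ι → ℕ) (v : ι → ℕ) (t : ℕ) : Prop :=
  isMCA A v t ∧ isLocating A v t

/-- The last `t` columns (0-based indices `≥ k - t`). -/
def lastCols (k t : ℕ) : Finset (Fin k) :=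
  Finset.univ.filter fun i => k - t ≤ (i : ℕ)

lemma lastCols_card (k t : ℕ) (ht : t ≤ k) : (lastCols k t).card = t := by
  unfold lastCols
  rw [Finset.card_filter, Fin.sum_univ_eq_sum_range (fun i => if k - t ≤ i then 1 else 0)]
  rw [← Finset.card_filter]
  have : (Finset.range k).filter (fun i => k - t ≤ i) = Finset.Ico (k - t) k := by
    ext x
    simp [Finset.mem_filter, Finset.mem_range, Finset.mem_Ico, and_comm]
  rw [this, Nat.card_Ico]
  omega

/-- Lower bound: if the first `k - t` sizes are at least 2 and nondecreasing, and the last `t`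
sizes are nondecreasing and at least twice the earlier ones, then any `(1-bar,t)`-locating
array has at least `∏_{i=k-t+1}^k v_i` rows. -/
theorem stmt_1 {N k t : ℕ} (ht : t < k) (v : Fin k → ℕ) (h2 : ∀ i, 2 ≤ v i)
    (hmono : Monotone v)
    (hjump : ∀ i j : Fin k, (i : ℕ) < k - t → k - t ≤ (j : ℕ) → 2 * v i ≤ v j)
    (A : Fin N → Fin k → ℕ) (hA : ∀ r j, A r j < v j) (hLA : isLA A v t) :
    ∏ i ∈ lastCols k t, v i ≤ N := by
  classical
  set I := lastCols k t with hI
  have hcard : I.card = t := lastCols_card k t ht.le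
  -- the zero interaction gives a row, so N > 0
  have hzero : isInter v t I (fun _ => 0) := ⟨hcard, fun i _ => by have := h2 i; simp only []; omega⟩
  obtain ⟨r₀, _⟩ := hLA.1 I _ hzero
  -- the set of partial assignments
  set S := I.pi (fun i => Finset.range (v i)) with hSdef
  have hScard : S.card = ∏ i ∈ I, v i := by
    rw [hSdef, Finset.card_pi]
    simp
  -- extend a partial assignment to a full one
  have key : ∀ σ ∈ S, isInter v t I (fun i => if h : i ∈ I then σ i h else 0) := by
    intro σ hσ
    refine ⟨hcard, fun i hi => ?_⟩
    simp only [dif_pos hi]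
    have := (Finset.mem_pi.mp hσ) i hi
    simpa using this
  have hrow : ∀ σ ∈ S, ∃ r : Fin N,
      r ∈ rowsOf A I (fun i => if h : i ∈ I then σ i h else 0) := by
    intro σ hσ
    exact hLA.1 I _ (key σ hσ)
  -- choice function
  let f : ((i : Fin k) → i ∈ I → ℕ) → Fin N := fun σ =>
    if h : ∃ r : Fin N, r ∈ rowsOf A I (fun i => if h : i ∈ I then σ i h else 0)
    then h.choose else r₀
  have hval : ∀ σ ∈ S, ∀ i (hi : i ∈ I), A (f σ) i = σ i hi := by
    intro σ hσ i hi
    have h := hrow σ hσ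
    have hc := h.choose_spec
    simp only [rowsOf, Finset.mem_filter] at hc
    have := hc.2 i hi
    simp only [f, dif_pos h]
    obtain ⟨r, hr⟩ : ∃ r, r = h.choose := ⟨_, rfl⟩
    have hs := h.choose_spec
    rw [← hr] at hs ⊢
    simp only [rowsOf, Finset.mem_filter] at hs
    simpa [dif_pos hi] using hs.2 i hi
  calc ∏ i ∈ I, v i = S.card := hScard.symm
    _ ≤ N := by
        rw [← Fintype.card_fin N, ← Finset.card_univ]
        apply Finset.card_le_card_of_injOn f (fun _ _ => Finset.mem_univ _)
        intro σ₁ h₁ σ₂ h₂ hf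
        funext i hi
        rw [← hval σ₁ h₁ i hi, ← hval σ₂ h₂ i hi, hf]
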